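/- arXiv:2108.09688 — 2 statements merged into one kernel-verified Lean document; each statement's English description precedes it below -/
import Mathlib

section
/- Let X be a Polish space and I a σ-ideal on the Borel subsets of X, and assume the c.c.c. condition: every family of I-positive Borel subsets of X whose pairwise intersections lie in I is countable. Let R ⊆ X × X be a relation with p[R] = X. Then the following are equivalent: (1) for every I-positive Borel set A ⊆ X there exist an I-positive Borel set B ⊆ A and a Borel measurable function f : X → X that uniformizes R on B; (2) there exist a Borel set A ⊆ X with X \ A ∈ I and a Borel measurable function f : X → X that uniformizes R on A. -/
/-- The projection of a relation `R ⊆ X × X` to the first coordinate. -/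
def proj {X : Type*} (R : Set (X × X)) : Set X := {x | ∃ y, (x, y) ∈ R}

/-- Lemma 2.2 (for a single relation with full projection): under c.c.c.,
uniformization up to `I` on densely many positive sets is equivalent to
uniformization on a single Borel set whose complement is in `I`. -/
theorem stmt1 {X : Type*} [TopologicalSpace X] [PolishSpace X]
    [MeasurableSpace X] [BorelSpace X]
    (I : Set (Set X))
    (hI_borel : ∀ A ∈ I, MeasurableSet A)
    (hI_empty : (∅ : Set X) ∈ I)
    (hI_mono : ∀ A B : Set X, MeasurableSet A → A ⊆ B → B ∈ I → A ∈ I)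
    (hI_union : ∀ f : ℕ → Set X, (∀ n, f n ∈ I) → (⋃ n, f n) ∈ I)
    (hccc : ∀ 𝒜 : Set (Set X), (∀ A ∈ 𝒜, MeasurableSet A ∧ A ∉ I) →
      (∀ A ∈ 𝒜, ∀ B ∈ 𝒜, A ≠ B → A ∩ B ∈ I) → 𝒜.Countable)
    (R : Set (X × X)) (hR : proj R = Set.univ) :
    (∀ A : Set X, MeasurableSet A → A ∉ I →
        ∃ B : Set X, MeasurableSet B ∧ B ⊆ A ∧ B ∉ I ∧
          ∃ f : X → X, Measurable f ∧ ∀ x ∈ B, (x, f x) ∈ R) ↔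
      (∃ A : Set X, MeasurableSet A ∧ Aᶜ ∈ I ∧
        ∃ f : X → X, Measurable f ∧ ∀ x ∈ A, (x, f x) ∈ R) := by
  classical
  have hI_union2 : ∀ A B : Set X, A ∈ I → B ∈ I → A ∪ B ∈ I := by
    intro A B hA hB
    have := hI_union (fun n => if n = 0 then A else B) (by
      intro n; by_cases hn : n = 0 <;> simp [hn, hA, hB])
    have heq : (⋃ n, (if n = 0 then A else B)) = A ∪ B := by
      ext x
      constructor
      · rintro ⟨s, ⟨n, rfl⟩, hx⟩
        by_cases hn : n = 0
        · left; simpa [hn] using hx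
        · right; simpa [hn] using hx
      · rintro (hx | hx)
        · exact ⟨A, ⟨0, by simp⟩, hx⟩
        · exact ⟨B, ⟨1, by simp⟩, hx⟩
    rwa [heq] at this
  constructor
  · intro h
    -- Zorn's lemma: a maximal almost-disjoint family of positive sets with uniformizers
    set S : Set (Set (Set X)) := {𝒜 | (∀ A ∈ 𝒜, MeasurableSet A ∧ A ∉ I ∧
        ∃ f : X → X, Measurable f ∧ ∀ x ∈ A, (x, f x) ∈ R) ∧
        ∀ A ∈ 𝒜, ∀ B ∈ 𝒜, A ≠ B → A ∩ B ∈ I} with hSdef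
    obtain ⟨𝒜, h𝒜⟩ := zorn_subset S (by
      intro c hc hchain
      refine ⟨⋃₀ c, ⟨?_, ?_⟩, fun s hs => Set.subset_sUnion_of_mem hs⟩
      · rintro A ⟨t, htc, hAt⟩
        exact (hc htc).1 A hAt
      · rintro A ⟨t, htc, hAt⟩ B ⟨u, huc, hBu⟩ hne
        rcases hchain.total htc huc with hsub | hsub
        · exact (hc huc).2 A (hsub hAt) B hBu hne
        · exact (hc htc).2 A hAt B (hsub hBu) hne)
    have h𝒜S : 𝒜 ∈ S := h𝒜.prop
    have hcount : 𝒜.Countable :=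
      hccc 𝒜 (fun A hA => ⟨(h𝒜S.1 A hA).1, (h𝒜S.1 A hA).2.1⟩) h𝒜S.2
    have hUmeas : MeasurableSet (⋃₀ 𝒜) :=
      MeasurableSet.sUnion hcount (fun A hA => (h𝒜S.1 A hA).1)
    have hcomp : (⋃₀ 𝒜)ᶜ ∈ I := by
      by_contra hpos
      obtain ⟨B, hBm, hBsub, hBpos, f, hf, hfR⟩ := h _ hUmeas.compl hpos
      have hBnot : B ∉ 𝒜 := by
        intro hB
        refine hBpos (hI_mono B ∅ hBm ?_ hI_empty)
        intro x hx
        exact (hBsub hx) ⟨B, hB, hx⟩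
      have hins : insert B 𝒜 ∈ S := by
        constructor
        · rintro A (rfl | hA)
          · exact ⟨hBm, hBpos, f, hf, hfR⟩
          · exact h𝒜S.1 A hA
        · rintro A (rfl | hA) C (rfl | hC) hne
          · exact absurd rfl hne
          · refine hI_mono _ ∅ (hBm.inter (h𝒜S.1 C hC).1) ?_ hI_empty
            rintro x ⟨hxA, hxC⟩
            exact (hBsub hxA) ⟨C, hC, hxC⟩
          · refine hI_mono _ ∅ ((h𝒜S.1 A hA).1.inter hBm) ?_ hI_empty
            rintro x ⟨hxA, hxC⟩
            exact (hBsub hxC) ⟨A, hA, hxA⟩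
          · exact h𝒜S.2 A hA C hC hne
      have := h𝒜.2 hins (Set.subset_insert B 𝒜) (Set.mem_insert B 𝒜)
      exact hBnot this
    by_cases hne : 𝒜.Nonempty
    · obtain ⟨g, hg⟩ := hcount.exists_surjective hne
      set B : ℕ → Set X := fun n => (g n : Set X) with hBdef
      have hBprop : ∀ n, MeasurableSet (B n) ∧ (B n) ∉ I ∧
          ∃ f : X → X, Measurable f ∧ ∀ x ∈ B n, (x, f x) ∈ R :=
        fun n => h𝒜S.1 _ (g n).2
      set F : ℕ → X → X := fun n => Classical.choose (hBprop n).2.2 with hFdef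
      have hF : ∀ n, Measurable (F n) ∧ ∀ x ∈ B n, (x, F n x) ∈ R :=
        fun n => Classical.choose_spec (hBprop n).2.2
      set p : ℕ → X → Prop := fun n x => x ∈ B n ∨ x ∉ ⋃ m, B m with hpdef
      have htotal : ∀ x, ∃ n, p n x := by
        intro x
        by_cases hx : x ∈ ⋃ m, B m
        · obtain ⟨s, ⟨n, rfl⟩, hxs⟩ := hx
          exact ⟨n, Or.inl hxs⟩
        · exact ⟨0, Or.inr hx⟩
      have hUB : (⋃ m, B m) = ⋃₀ 𝒜 := by
        ext x
        constructor
        · rintro ⟨s, ⟨n, rfl⟩, hxs⟩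
          exact ⟨B n, (g n).2, hxs⟩
        · rintro ⟨A, hA, hxA⟩
          obtain ⟨n, hn⟩ := hg ⟨A, hA⟩
          exact ⟨B n, ⟨n, rfl⟩, by rw [hBdef]; simp only [hn]; exact hxA⟩
      refine ⟨⋃ m, B m, MeasurableSet.iUnion (fun n => (hBprop n).1), ?_,
        fun x => F (Nat.find (htotal x)) x, ?_, ?_⟩
      · rw [hUB]; exact hcomp
      · refine Measurable.find (fun n => (hF n).1) (fun n => ?_) htotal
        have : {x | p n x} = B n ∪ (⋃ m, B m)ᶜ := rfl
        rw [this]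
        exact (hBprop n).1.union (MeasurableSet.iUnion (fun m => (hBprop m).1)).compl
      · intro x hx
        have hspec := Nat.find_spec (htotal x)
        rcases hspec with hmem | hnot
        · exact (hF _).2 x hmem
        · exact absurd hx hnot
    · -- 𝒜 is empty, so univ ∈ I and the empty set works
      rw [Set.not_nonempty_iff_eq_empty] at hne
      refine ⟨∅, MeasurableSet.empty, ?_, id, measurable_id, by simp⟩
      simpa [hne] using hcomp
  · rintro ⟨A, hAm, hAc, f, hf, hfR⟩ A₀ hA₀m hA₀pos
    refine ⟨A₀ ∩ A, hA₀m.inter hAm, Set.inter_subset_left, ?_, f, hf,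
      fun x hx => hfR x hx.2⟩
    intro hBI
    have hdiff : A₀ \ A ∈ I :=
      hI_mono _ _ (hA₀m.diff hAm) (fun x hx => hx.2) hAc
    have : A₀ ∈ I := by
      refine hI_mono A₀ ((A₀ ∩ A) ∪ (A₀ \ A)) hA₀m ?_ (hI_union2 _ _ hBI hdiff)
      intro x hx
      by_cases hxA : x ∈ A
      · exact Or.inl ⟨hx, hxA⟩
      · exact Or.inr ⟨hx, hxA⟩
    exact hA₀pos this
end

section
/- Let G = ℕ → ZMod 2 be the Cantor group, i.e., the space of binary sequences with the product topology and pointwise addition modulo 2. Let R ⊆ G be a set that is closed under addition (x, y ∈ R implies x + y ∈ R), contains every finitely supported element of G (every x ∈ G with x(n) = 0 for all but finitely many n), and satisfies R ≠ G. If R is Baire measurable (i.e., has the Baire property: R differs from an open set by a meager set), then R is meager. -/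
open Topology Filter Set

private lemma zmod2_add_self (a : ZMod 2) : a + a = 0 := CharTwo.add_self_eq_zero a

private lemma fun_add_self (x : ℕ → ZMod 2) : x + x = 0 :=
  funext fun n => zmod2_add_self (x n)

private lemma finsupp_dense :
    Dense {x : ℕ → ZMod 2 | ({n : ℕ | x n ≠ 0}).Finite} := by
  intro x
  have htend : Filter.Tendsto (fun n : ℕ => fun i => if i < n then x i else 0)
      Filter.atTop (nhds x) := by
    rw [tendsto_pi_nhds]
    intro i
    refine Filter.Tendsto.congr' ?_ tendsto_const_nhds
    filter_upwards [Filter.eventually_gt_atTop i] with n hn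
    simp [hn]
  refine mem_closure_of_tendsto htend (Filter.Eventually.of_forall fun n => ?_)
  have : {i : ℕ | (if i < n then x i else 0) ≠ 0} ⊆ {i | i < n} := by
    intro i hi
    by_contra h
    simp only [mem_setOf_eq] at hi h
    rw [if_neg h] at hi
    exact hi rfl
  exact (Set.finite_Iio n).subset this

private lemma finsupp_countable :
    ({x : ℕ → ZMod 2 | ({n : ℕ | x n ≠ 0}).Finite}).Countable := by
  have : {x : ℕ → ZMod 2 | ({n : ℕ | x n ≠ 0}).Finite}
      = Set.range (fun f : ℕ →₀ ZMod 2 => ⇑f) := by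
    ext x
    constructor
    · intro hx
      exact ⟨⟨hx.toFinset, x, fun n => by simp⟩, rfl⟩
    · rintro ⟨f, rfl⟩
      exact f.finite_support
  rw [this]
  exact Set.countable_range _

/-- Claim inside Lemma 5.2: a proper subset of the Cantor group `ℕ → ZMod 2`
that is closed under addition and contains all finitely supported sequences
is meager whenever it is Baire measurable. -/
theorem stmt5 (R : Set (ℕ → ZMod 2))
    (h_add : ∀ x ∈ R, ∀ y ∈ R, x + y ∈ R)
    (h_fin : ∀ x : ℕ → ZMod 2, ({n : ℕ | x n ≠ 0}).Finite → x ∈ R)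
    (h_ne : R ≠ Set.univ)
    (h_bm : BaireMeasurableSet R) :
    IsMeagre R := by
  by_contra hR
  set S : Set (ℕ → ZMod 2) := {x | ({n : ℕ | x n ≠ 0}).Finite} with hSdef
  have hSsub : S ⊆ R := fun x hx => h_fin x hx
  -- translation invariance of R by elements of R
  have htrans : ∀ s ∈ R, ∀ z : ℕ → ZMod 2, z ∉ R → s + z ∉ R := by
    intro s hs z hz hcon
    have : s + (s + z) ∈ R := h_add s hs _ hcon
    rw [← add_assoc, fun_add_self, zero_add] at this
    exact hz this
  -- Baire property: open U with meager symmetric difference M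
  obtain ⟨U, hUopen, hRU⟩ := h_bm.residualEq_isOpen
  set M : Set (ℕ → ZMod 2) := {x | ¬(x ∈ R ↔ x ∈ U)} with hMdef
  have hMmeagre : IsMeagre M := by
    have : Mᶜ = {x | x ∈ R ↔ x ∈ U} := by ext x; simp [hMdef]
    rw [IsMeagre, this]
    exact Filter.eventuallyEq_set.mp hRU
  have hRsubMU : R ⊆ M ∪ U := by
    intro x hx
    by_cases hxU : x ∈ U
    · exact Or.inr hxU
    · exact Or.inl (by simp [hMdef, hx, hxU])
  have hUsubMR : U ⊆ M ∪ R := by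
    intro x hx
    by_cases hxR : x ∈ R
    · exact Or.inr hxR
    · exact Or.inl (by simp [hMdef, hx, hxR])
  -- U is nonempty, else R is meager
  have hUne : U.Nonempty := by
    rcases Set.eq_empty_or_nonempty U with h | h
    · exfalso
      apply hR
      refine hMmeagre.mono ?_
      intro x hx
      rcases hRsubMU hx with h' | h'
      · exact h'
      · rw [h] at h'; exact absurd h' (Set.notMem_empty x)
    · exact h
  obtain ⟨u, hu⟩ := hUne
  -- for any z, some finitely supported s satisfies z + s ∈ U
  have hkey : ∀ z : ℕ → ZMod 2, ∃ s ∈ S, z + s ∈ U := by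
    intro z
    have hpre : IsOpen ((fun w => z + w) ⁻¹' U) :=
      hUopen.preimage (Homeomorph.addLeft z).continuous
    have hprene : ((fun w => z + w) ⁻¹' U).Nonempty := by
      refine ⟨z + u, ?_⟩
      simp only [Set.mem_preimage]
      rw [← add_assoc, fun_add_self, zero_add]
      exact hu
    obtain ⟨s, hs1, hs2⟩ := finsupp_dense.inter_open_nonempty _ hpre hprene
    exact ⟨s, hs2, hs1⟩
  -- Rᶜ is covered by translates of M by elements of S
  have hcover : Rᶜ ⊆ ⋃ s ∈ S, (fun w => w + s) ⁻¹' M := by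
    intro z hz
    obtain ⟨s, hsS, hsU⟩ := hkey z
    refine Set.mem_biUnion hsS ?_
    have hzs : z + s ∉ R := by
      intro hcon
      have : (z + s) + s ∈ R := h_add _ hcon s (hSsub hsS)
      rw [add_assoc, fun_add_self, add_zero] at this
      exact hz this
    simp only [Set.mem_preimage, hMdef, Set.mem_setOf_eq]
    intro hiff
    exact hzs (hiff.mpr hsU)
  -- each translate of M is meager, so Rᶜ is meager
  have htransl : ∀ s : ℕ → ZMod 2, IsMeagre ((fun w => w + s) ⁻¹' M) := by
    intro s
    exact hMmeagre.preimage_of_isOpenMap (Homeomorph.addRight s).continuous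
      ((Homeomorph.addRight s).isOpenMap)
  have hRcm : IsMeagre Rᶜ := by
    refine IsMeagre.mono hcover ?_
    rw [IsMeagre, Set.compl_iUnion₂]
    exact (countable_bInter_mem finsupp_countable).mpr fun s _ => htransl s
  -- translate R by a point outside R to get R ⊆ meager set
  have : ∃ z, z ∉ R := by
    by_contra h
    push_neg at h
    exact h_ne (Set.eq_univ_of_forall h)
  obtain ⟨z, hz⟩ := this
  apply hR
  have hsub : R ⊆ (fun w => z + w) ⁻¹' Rᶜ := by
    intro r hr
    simp only [Set.mem_preimage, Set.mem_compl_iff]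
    intro hcon
    have : z + r + r ∈ R := h_add _ hcon r hr
    rw [add_assoc, fun_add_self, add_zero] at this
    exact hz this
  exact (hRcm.preimage_of_isOpenMap (Homeomorph.addLeft z).continuous
    ((Homeomorph.addLeft z).isOpenMap)).mono hsub
end
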